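/- arXiv:2011.03693 — 3 statements merged into one kernel-verified Lean document; each statement's English description precedes it below -/
import Mathlib

section
/- For v = -1/m with m a positive integer, and k₁, ..., k_N ∈ ℕ, the product ∏_{i=1}^N â_{k_i}(v) is at least â_{k₁+...+k_N}(v), where â_k(v) := ∏_{j=0}^{k-1}(1+vj). -/
noncomputable def ahat (k : ℕ) (v : ℝ) : ℝ := ∏ j ∈ Finset.range k, (1 + v * j)

lemma ahat_eq_zero (m k : ℕ) (hm : 1 ≤ m) (hk : m < k) : ahat k (-1 / m) = 0 := by
  apply Finset.prod_eq_zero (Finset.mem_range.mpr hk)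
  have hm0 : (m : ℝ) ≠ 0 := Nat.cast_ne_zero.mpr (by omega)
  field_simp
  norm_num

lemma ahat_nonneg (m k : ℕ) (hm : 1 ≤ m) : 0 ≤ ahat k (-1 / m) := by
  rcases le_or_gt k m with h | h
  · apply Finset.prod_nonneg
    intro j hj
    have hm0 : (0 : ℝ) < m := by exact_mod_cast Nat.lt_of_lt_of_le Nat.zero_lt_one hm
    have hjm : (j : ℝ) ≤ m := by
      exact_mod_cast le_of_lt (lt_of_lt_of_le (Finset.mem_range.mp hj) h)
    have h1 : (j : ℝ) / m ≤ 1 := (div_le_one hm0).mpr hjm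
    have h2 : 1 + (-1 / (m:ℝ)) * j = 1 - (j : ℝ) / m := by ring
    rw [h2]; linarith
  · rw [ahat_eq_zero m k hm h]

lemma ahat_add_le (m a b : ℕ) (hm : 1 ≤ m) :
    ahat (a + b) (-1 / m) ≤ ahat a (-1 / m) * ahat b (-1 / m) := by
  rcases lt_or_ge m (a + b) with h | h
  · rw [ahat_eq_zero m (a + b) hm h]
    exact mul_nonneg (ahat_nonneg m a hm) (ahat_nonneg m b hm)
  · have hm0 : (0 : ℝ) < m := by exact_mod_cast Nat.lt_of_lt_of_le Nat.zero_lt_one hm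
    unfold ahat
    rw [Finset.prod_range_add]
    apply mul_le_mul_of_nonneg_left _ (ahat_nonneg m a hm)
    apply Finset.prod_le_prod
    · intro i hi
      have hi' : a + i < a + b := by
        have := Finset.mem_range.mp hi; omega
      have hile : (a + i : ℝ) ≤ m := by exact_mod_cast le_of_lt (lt_of_lt_of_le hi' h)
      have h1 : ((a : ℝ) + i) / m ≤ 1 := (div_le_one hm0).mpr hile
      have h2 : 1 + (-1 / (m:ℝ)) * (a + i : ℕ) = 1 - ((a : ℝ) + i) / m := by
        push_cast; ring
      rw [h2]; linarith
    · intro i hi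
      have h2 : 1 + (-1 / (m:ℝ)) * (a + i : ℕ) = 1 + (-1 / (m:ℝ)) * i - (a : ℝ) / m := by
        push_cast; ring
      have ha : 0 ≤ (a : ℝ) / m := by positivity
      rw [h2]; linarith

lemma ahat_sum_le {ι : Type*} (m : ℕ) (hm : 1 ≤ m) (s : Finset ι) (k : ι → ℕ) :
    ahat (∑ i ∈ s, k i) (-1 / m) ≤ ∏ i ∈ s, ahat (k i) (-1 / m) := by
  induction s using Finset.cons_induction with
  | empty => simp [ahat]
  | cons a s ha ih =>
    rw [Finset.sum_cons, Finset.prod_cons]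
    calc ahat (k a + ∑ i ∈ s, k i) (-1 / m)
        ≤ ahat (k a) (-1 / m) * ahat (∑ i ∈ s, k i) (-1 / m) := ahat_add_le m _ _ hm
      _ ≤ ahat (k a) (-1 / m) * ∏ i ∈ s, ahat (k i) (-1 / m) :=
          mul_le_mul_of_nonneg_left ih (ahat_nonneg m _ hm)

theorem ahat_prod_ge (m : ℕ) (hm : 1 ≤ m) (N : ℕ) (k : Fin N → ℕ) :
    ahat (∑ i, k i) (-1 / m) ≤ ∏ i, ahat (k i) (-1 / m) := by
  exact ahat_sum_le m hm Finset.univ k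
end

section
/- Define c(k, ℓ) := ∑ 1/(a₁·a₂···a_ℓ), where the sum runs over all ℓ-tuples of positive integers (a₁,...,a_ℓ) with a₁+...+a_ℓ = k. Then for all integers k ≥ 1 and ℓ ≥ 1, c(k, ℓ) ≤ (2 log(e k))^{ℓ-1} / k. -/
/-- `c(k, ℓ)`: sum over compositions of `k` into `ℓ` positive parts of the
reciprocal of the product of the parts. -/
noncomputable def compSum (k ℓ : ℕ) : ℝ :=
  ∑ a ∈ (Fintype.piFinset fun _ : Fin ℓ => Finset.range (k + 1)).filter
      (fun a => (∀ i, 1 ≤ a i) ∧ ∑ i, a i = k),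
    ∏ i, (1 : ℝ) / (a i)

lemma compSum_one (k : ℕ) (hk : 1 ≤ k) : compSum k 1 = 1 / k := by
  unfold compSum
  have hset : (Fintype.piFinset fun _ : Fin 1 => Finset.range (k + 1)).filter
      (fun a => (∀ i, 1 ≤ a i) ∧ ∑ i, a i = k) = {fun _ => k} := by
    ext a
    simp only [Finset.mem_filter, Fintype.mem_piFinset, Finset.mem_range,
      Finset.mem_singleton, Fin.sum_univ_one]
    constructor
    · rintro ⟨-, -, h⟩
      funext i
      have : i = 0 := Subsingleton.elim _ _
      rw [this, h]
    · rintro rfl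
      exact ⟨fun i => Nat.lt_succ_self k, fun i => hk, rfl⟩
  rw [hset, Finset.sum_singleton, Fin.prod_univ_one]

lemma compSum_succ (k ℓ : ℕ) (hℓ : 1 ≤ ℓ) :
    compSum k (ℓ + 1) = ∑ j ∈ Finset.Ico 1 k, (1 / (j : ℝ)) * compSum (k - j) ℓ := by
  unfold compSum
  simp_rw [Finset.mul_sum]
  rw [Finset.sum_sigma']
  refine Finset.sum_nbij' (fun a => ⟨a 0, Fin.tail a⟩) (fun p => Fin.cons p.1 p.2)
    ?_ ?_ ?_ ?_ ?_
  · intro a ha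
    simp only [Finset.mem_filter, Fintype.mem_piFinset, Finset.mem_range] at ha
    obtain ⟨hlt, hpos, hsum⟩ := ha
    have hsum' : a 0 + ∑ i : Fin ℓ, Fin.tail a i = k := by
      rw [← hsum, Fin.sum_univ_succ]; rfl
    have htail_le : ∀ i, Fin.tail a i ≤ ∑ i : Fin ℓ, Fin.tail a i := fun i =>
      Finset.single_le_sum (fun _ _ => Nat.zero_le _) (Finset.mem_univ i)
    have h1 : 1 ≤ ∑ i : Fin ℓ, Fin.tail a i :=
      le_trans (hpos (⟨0, hℓ⟩ : Fin ℓ).succ) (htail_le ⟨0, hℓ⟩)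
    simp only [Finset.mem_sigma, Finset.mem_Ico, Finset.mem_filter,
      Fintype.mem_piFinset, Finset.mem_range]
    refine ⟨⟨hpos 0, by omega⟩, fun i => by have := htail_le i; omega,
      fun i => hpos i.succ, by omega⟩
  · rintro ⟨j, b⟩ hp
    simp only [Finset.mem_sigma, Finset.mem_Ico, Finset.mem_filter,
      Fintype.mem_piFinset, Finset.mem_range] at hp
    obtain ⟨⟨hj1, hjk⟩, hblt, hbpos, hbsum⟩ := hp
    simp only [Finset.mem_filter, Fintype.mem_piFinset, Finset.mem_range]
    refine ⟨?_, ?_, ?_⟩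
    · intro i
      refine Fin.cases ?_ ?_ i
      · simpa using by omega
      · intro i'
        simp only [Fin.cons_succ]
        have := hblt i'
        omega
    · intro i
      refine Fin.cases ?_ ?_ i
      · simpa using hj1
      · intro i'
        simpa using hbpos i'
    · rw [Fin.sum_univ_succ]
      simp only [Fin.cons_zero, Fin.cons_succ]
      rw [hbsum]
      omega
  · intro a _
    exact Fin.cons_self_tail a
  · rintro ⟨j, b⟩ _
    simp [Fin.tail_cons]
  · intro a _
    rw [Fin.prod_univ_succ]
    rfl

open Finset Real in
theorem compSum_le (k ℓ : ℕ) (hk : 1 ≤ k) (hℓ : 1 ≤ ℓ) :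
    compSum k ℓ ≤ (2 * (1 + Real.log k)) ^ (ℓ - 1) / k := by
  induction ℓ, hℓ using Nat.le_induction generalizing k with
  | base =>
    rw [compSum_one k hk]
    norm_num
  | succ ℓ hℓ IH =>
    have hk0 : (0 : ℝ) < k := by exact_mod_cast hk
    have hlogk : (0 : ℝ) ≤ Real.log k := Real.log_nonneg (by exact_mod_cast hk)
    set C : ℝ := (2 * (1 + Real.log k)) ^ (ℓ - 1) with hC
    have hC0 : 0 ≤ C := by positivity
    have hH : ∑ j ∈ Finset.Ico 1 k, (1 / (j : ℝ)) ≤ 1 + Real.log k := by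
      calc ∑ j ∈ Finset.Ico 1 k, (1 / (j : ℝ))
          ≤ ∑ j ∈ Finset.Icc 1 k, (1 / (j : ℝ)) := by
            refine Finset.sum_le_sum_of_subset_of_nonneg Finset.Ico_subset_Icc_self ?_
            intro i hi _
            positivity
        _ = (harmonic k : ℝ) := by
            rw [harmonic_eq_sum_Icc]
            push_cast
            simp [one_div]
        _ ≤ 1 + Real.log k := harmonic_le_one_add_log k
    have hrefl : ∑ j ∈ Finset.Ico 1 k, (1 / ((k - j : ℕ) : ℝ))
        = ∑ j ∈ Finset.Ico 1 k, (1 / (j : ℝ)) := by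
      refine Finset.sum_nbij' (fun j => k - j) (fun j => k - j) ?_ ?_ ?_ ?_ ?_
      · intro j hj; simp only [Finset.mem_Ico] at hj ⊢; omega
      · intro j hj; simp only [Finset.mem_Ico] at hj ⊢; omega
      · intro j hj; simp only [Finset.mem_Ico] at hj; show k - (k - j) = j; omega
      · intro j hj; simp only [Finset.mem_Ico] at hj; show k - (k - j) = j; omega
      · intro j hj; rfl
    rw [compSum_succ k ℓ hℓ]
    have key : ∀ j ∈ Finset.Ico 1 k,
        (1 / (j : ℝ)) * compSum (k - j) ℓ
          ≤ C * (1 / (k : ℝ)) * (1 / (j : ℝ) + 1 / ((k - j : ℕ) : ℝ)) := by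
      intro j hj
      simp only [Finset.mem_Ico] at hj
      have hkj : 1 ≤ k - j := by omega
      have hkjR : ((k - j : ℕ) : ℝ) = (k : ℝ) - j := by
        rw [Nat.cast_sub hj.2.le]
      have hkj0 : (0 : ℝ) < ((k - j : ℕ) : ℝ) := by exact_mod_cast hkj
      have hj0 : (0 : ℝ) < j := by exact_mod_cast hj.1
      have h1 : compSum (k - j) ℓ ≤ (2 * (1 + Real.log (k - j : ℕ))) ^ (ℓ - 1)
          / ((k - j : ℕ) : ℝ) := IH (k - j) hkj
      have h2 : (2 * (1 + Real.log (k - j : ℕ))) ^ (ℓ - 1) ≤ C := by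
        refine pow_le_pow_left₀ ?_ ?_ _
        · have : (1 : ℝ) ≤ ((k - j : ℕ) : ℝ) := by exact_mod_cast hkj
          have := Real.log_nonneg this
          nlinarith
        · have hle : ((k - j : ℕ) : ℝ) ≤ (k : ℝ) := by
            rw [hkjR]; linarith
          have := Real.log_le_log hkj0 hle
          nlinarith
      calc (1 / (j : ℝ)) * compSum (k - j) ℓ
          ≤ (1 / (j : ℝ)) * (C / ((k - j : ℕ) : ℝ)) := by
            refine mul_le_mul_of_nonneg_left (h1.trans ?_) (by positivity)
            exact (div_le_div_iff_of_pos_right hkj0).mpr h2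
        _ = C * (1 / (k : ℝ)) * (1 / (j : ℝ) + 1 / ((k - j : ℕ) : ℝ)) := by
            rw [hkjR]
            have h3 : (k : ℝ) - j ≠ 0 := by rw [← hkjR]; positivity
            field_simp
            ring
    calc ∑ j ∈ Finset.Ico 1 k, (1 / (j : ℝ)) * compSum (k - j) ℓ
        ≤ ∑ j ∈ Finset.Ico 1 k,
            C * (1 / (k : ℝ)) * (1 / (j : ℝ) + 1 / ((k - j : ℕ) : ℝ)) :=
          Finset.sum_le_sum key
      _ = C * (1 / (k : ℝ)) * (∑ j ∈ Finset.Ico 1 k, (1 / (j : ℝ))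
            + ∑ j ∈ Finset.Ico 1 k, (1 / ((k - j : ℕ) : ℝ))) := by
          rw [← Finset.mul_sum, Finset.sum_add_distrib]
      _ = C * (1 / (k : ℝ)) * (2 * ∑ j ∈ Finset.Ico 1 k, (1 / (j : ℝ))) := by
          rw [hrefl]; ring
      _ ≤ C * (1 / (k : ℝ)) * (2 * (1 + Real.log k)) := by
          have h2 : (0 : ℝ) ≤ C * (1 / (k : ℝ)) := by positivity
          exact mul_le_mul_of_nonneg_left (by linarith) h2
      _ = (2 * (1 + Real.log k)) ^ (ℓ + 1 - 1) / k := by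
          rw [Nat.add_sub_cancel, hC]
          rw [show (2 * (1 + Real.log k)) ^ (ℓ - 1) * (1 / (k : ℝ))
              * (2 * (1 + Real.log k))
              = (2 * (1 + Real.log k)) ^ (ℓ - 1) * (2 * (1 + Real.log k)) / k by ring]
          rw [← pow_succ, Nat.sub_add_cancel hℓ]
end

section
/- For all integers k ≥ 1 and ℓ ≥ 1, the absolute value of the coefficient of t^k in the formal power series (arctan t)^ℓ is at most c(k, ℓ) := ∑_{a₁+...+a_ℓ=k, a_i ≥ 1} 1/(a₁···a_ℓ), and in particular at most (2 log(ek))^{ℓ-1}/k. Moreover this coefficient vanishes unless k ≡ ℓ (mod 2). -/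
open Finset PowerSeries

/-- The formal power series of `arctan`. -/
noncomputable def arctanSeries : PowerSeries ℝ :=
  PowerSeries.mk fun k => if Odd k then (-1 : ℝ) ^ ((k - 1) / 2) / k else 0

lemma coeff_pow_fin (φ : PowerSeries ℝ) (ℓ k : ℕ) :
    PowerSeries.coeff k (φ ^ ℓ) =
      ∑ a ∈ Finset.piAntidiag (Finset.univ : Finset (Fin ℓ)) k,
        ∏ i, PowerSeries.coeff (a i) φ := by
  rw [show φ ^ ℓ = ∏ _i : Fin ℓ, φ by simp]
  rw [PowerSeries.coeff_prod]
  refine Finset.sum_nbij' (fun l => ⇑l) (fun a => Finsupp.equivFunOnFinite.symm a) ?_ ?_ ?_ ?_ ?_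
  · intro l hl
    simp only [mem_finsuppAntidiag] at hl
    simp [mem_piAntidiag, ← hl.1]
  · intro a ha
    simp only [mem_piAntidiag] at ha
    simp only [mem_finsuppAntidiag]
    constructor
    · simpa using ha.1
    · simp
  · intro l _; ext i; simp
  · intro a _; ext i; simp
  · intro l _; simp

lemma compSum_eq (k ℓ : ℕ) :
    compSum k ℓ = ∑ a ∈ Finset.piAntidiag (Finset.univ : Finset (Fin ℓ)) k,
      ∏ i, (1 : ℝ) / (a i) := by
  rw [compSum]
  apply Finset.sum_subset
  · intro a ha
    simp only [mem_filter, Fintype.mem_piFinset, mem_range] at ha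
    simp [mem_piAntidiag, ha.2.2]
  · intro a ha hna
    simp only [mem_piAntidiag, mem_univ] at ha
    simp only [mem_filter, Fintype.mem_piFinset, mem_range] at hna
    by_cases h1 : ∀ i, 1 ≤ a i
    · exfalso
      apply hna
      refine ⟨fun i => ?_, h1, ha.1⟩
      have h2 : a i ≤ ∑ j, a j := Finset.single_le_sum (fun j _ => Nat.zero_le _) (mem_univ i)
      have h3 : ∑ j, a j = k := ha.1
      omega
    · push_neg at h1
      obtain ⟨i, hi⟩ := h1
      apply Finset.prod_eq_zero (mem_univ i)
      have : a i = 0 := by omega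
      simp [this]

lemma coeff_arctan_abs (a : ℕ) : |PowerSeries.coeff a arctanSeries| ≤ 1 / a := by
  rw [arctanSeries, PowerSeries.coeff_mk]
  split_ifs with h
  · rw [abs_div, abs_pow, abs_neg, abs_one, one_pow, Nat.abs_cast]
  · simp only [abs_zero]
    positivity

lemma coeff_arctan_even {a : ℕ} (h : ¬ Odd a) : PowerSeries.coeff a arctanSeries = 0 := by
  rw [arctanSeries, PowerSeries.coeff_mk, if_neg h]

lemma coeff_zero_arctan_pow {ℓ : ℕ} (hℓ : 1 ≤ ℓ) :
    PowerSeries.coeff 0 (arctanSeries ^ ℓ) = 0 := by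
  rw [PowerSeries.coeff_zero_eq_constantCoeff, map_pow]
  have : PowerSeries.constantCoeff arctanSeries = 0 := by
    rw [← PowerSeries.coeff_zero_eq_constantCoeff]
    exact coeff_arctan_even (by simp)
  rw [this, zero_pow (by omega)]

lemma arctan_part1 (k ℓ : ℕ) :
    |PowerSeries.coeff k (arctanSeries ^ ℓ)| ≤ compSum k ℓ := by
  rw [coeff_pow_fin, compSum_eq]
  refine (Finset.abs_sum_le_sum_abs _ _).trans (Finset.sum_le_sum fun a _ => ?_)
  rw [Finset.abs_prod]
  exact Finset.prod_le_prod (fun i _ => abs_nonneg _) (fun i _ => coeff_arctan_abs _)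

lemma arctan_part3 (k ℓ : ℕ) (h : ¬ (k % 2 = ℓ % 2)) :
    PowerSeries.coeff k (arctanSeries ^ ℓ) = 0 := by
  rw [coeff_pow_fin]
  apply Finset.sum_eq_zero
  intro a ha
  by_contra hne
  have hodd : ∀ i, Odd (a i) := by
    intro i
    by_contra ho
    exact hne (Finset.prod_eq_zero (mem_univ i) (coeff_arctan_even ho))
  simp only [mem_piAntidiag] at ha
  apply h
  have h1 : ∀ i : Fin ℓ, ((a i : ℕ) : ZMod 2) = 1 := by
    intro i
    have h2 := (Nat.odd_iff).1 (hodd i)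
    rw [← ZMod.natCast_mod, h2, Nat.cast_one]
  have : ((k : ZMod 2)) = ((ℓ : ZMod 2)) := by
    rw [← ha.1]
    push_cast
    simp [h1, Finset.sum_const]
  exact (ZMod.natCast_eq_natCast_iff k ℓ 2).1 this

lemma harm_bound (n : ℕ) : ∑ i ∈ Finset.range n, (1:ℝ)/(i+1) ≤ 1 + Real.log n := by
  have h := harmonic_le_one_add_log n
  have heq : ((harmonic n : ℚ) : ℝ) = ∑ i ∈ Finset.range n, (1:ℝ)/(i+1) := by
    rw [harmonic]
    push_cast
    simp [one_div]
  linarith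

lemma conv_bound (k : ℕ) (hk : 1 ≤ k) :
    ∑ p ∈ Finset.range (k+1), (if p = 0 ∨ p = k then (0:ℝ) else 1/((p:ℝ)*((k-p : ℕ):ℝ)))
      ≤ 2*(1+Real.log k)/k := by
  set u : ℕ → ℝ := fun x => if x = 0 then (0:ℝ) else 1/x with hu
  have hknn : (0:ℝ) < k := by exact_mod_cast hk
  have hlog : (0:ℝ) ≤ Real.log k := Real.log_nonneg (by exact_mod_cast hk)
  have hstep : ∀ p ∈ Finset.range (k+1),
      (if p = 0 ∨ p = k then (0:ℝ) else 1/((p:ℝ)*((k-p : ℕ):ℝ)))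
        ≤ (1/k) * (u p + u (k-p)) := by
    intro p hp
    rw [Finset.mem_range] at hp
    by_cases h0 : p = 0 ∨ p = k
    · rw [if_pos h0]
      have h1 : 0 ≤ u p := by rw [hu]; dsimp only; split_ifs <;> positivity
      have h2 : 0 ≤ u (k-p) := by rw [hu]; dsimp only; split_ifs <;> positivity
      positivity
    · rw [if_neg h0]
      push_neg at h0
      have hp1 : 1 ≤ p := by omega
      have hq1 : 1 ≤ k - p := by omega
      have hqe : ((k - p : ℕ) : ℝ) = (k:ℝ) - p := by
        have : p ≤ k := by omega
        push_cast [this]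
        ring
      rw [hu]
      dsimp only
      rw [if_neg (by omega), if_neg (by omega)]
      have hpp : (0:ℝ) < p := by exact_mod_cast hp1
      have hqq : (0:ℝ) < ((k-p:ℕ):ℝ) := by exact_mod_cast hq1
      rw [hqe] at hqq ⊢
      rw [div_add_div _ _ (by linarith) (by linarith)]
      rw [div_mul_div_comm]
      apply le_of_eq
      rw [div_eq_div_iff (by positivity) (by positivity)]
      ring
  calc ∑ p ∈ Finset.range (k+1), (if p = 0 ∨ p = k then (0:ℝ) else 1/((p:ℝ)*((k-p : ℕ):ℝ)))
      ≤ ∑ p ∈ Finset.range (k+1), (1/k) * (u p + u (k-p)) := Finset.sum_le_sum hstep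
    _ = (1/k) * (∑ p ∈ Finset.range (k+1), u p + ∑ p ∈ Finset.range (k+1), u (k-p)) := by
        rw [← Finset.sum_add_distrib, Finset.mul_sum]
    _ = (1/k) * (2 * ∑ p ∈ Finset.range (k+1), u p) := by
        have : ∑ p ∈ Finset.range (k+1), u (k-p) = ∑ p ∈ Finset.range (k+1), u p := by
          have := Finset.sum_range_reflect u (k+1)
          simpa using this
        rw [this]; ring
    _ ≤ (1/k) * (2 * (1 + Real.log k)) := by
        have hsum : ∑ p ∈ Finset.range (k+1), u p = ∑ i ∈ Finset.range k, (1:ℝ)/(i+1) := by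
          rw [Finset.sum_range_succ']
          have h0 : u 0 = 0 := by simp [hu]
          rw [h0, add_zero]
          refine Finset.sum_congr rfl fun i _ => ?_
          simp only [hu]
          rw [if_neg (by omega)]
          push_cast
          ring
        rw [hsum]
        have := harm_bound k
        have h2 : (0:ℝ) < 1/k := by positivity
        nlinarith
    _ = 2*(1+Real.log k)/k := by field_simp

lemma arctan_part2 (ℓ : ℕ) (hℓ : 1 ≤ ℓ) : ∀ k : ℕ, 1 ≤ k →
    |PowerSeries.coeff k (arctanSeries ^ ℓ)| ≤ (2 * (1 + Real.log k)) ^ (ℓ - 1) / k := by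
  induction ℓ, hℓ using Nat.le_induction with
  | base =>
    intro k hk
    simpa using coeff_arctan_abs k
  | succ ℓ hℓ IH =>
    intro k hk
    have hlogk : (0:ℝ) ≤ Real.log k := Real.log_nonneg (by exact_mod_cast hk)
    have hbase : (0:ℝ) ≤ 2 * (1 + Real.log k) := by linarith
    set C : ℝ := (2 * (1 + Real.log k)) ^ (ℓ - 1) with hC
    have hCnn : 0 ≤ C := pow_nonneg hbase _
    have hkpos : (0:ℝ) < k := by exact_mod_cast hk
    rw [pow_succ, PowerSeries.coeff_mul]
    calc |∑ x ∈ Finset.HasAntidiagonal.antidiagonal k,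
            PowerSeries.coeff x.1 (arctanSeries ^ ℓ) * PowerSeries.coeff x.2 arctanSeries|
        ≤ ∑ x ∈ Finset.HasAntidiagonal.antidiagonal k,
            |PowerSeries.coeff x.1 (arctanSeries ^ ℓ) * PowerSeries.coeff x.2 arctanSeries| :=
          Finset.abs_sum_le_sum_abs _ _
      _ ≤ ∑ x ∈ Finset.HasAntidiagonal.antidiagonal k,
            C * (if x.1 = 0 ∨ x.2 = 0 then (0:ℝ) else 1/((x.1:ℝ)*(x.2:ℝ))) := by
          refine Finset.sum_le_sum fun x hx => ?_
          rw [Finset.HasAntidiagonal.mem_antidiagonal] at hx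
          rw [abs_mul]
          by_cases h1 : x.1 = 0
          · simp [h1, coeff_zero_arctan_pow hℓ]
          by_cases h2 : x.2 = 0
          · simp [h2, coeff_arctan_even (by simp : ¬ Odd 0)]
          rw [if_neg (by tauto)]
          have hp1 : 1 ≤ x.1 := Nat.one_le_iff_ne_zero.2 h1
          have hq1 : 1 ≤ x.2 := Nat.one_le_iff_ne_zero.2 h2
          have hppos : (0:ℝ) < x.1 := by exact_mod_cast hp1
          have hqpos : (0:ℝ) < x.2 := by exact_mod_cast hq1
          have hlogp : (0:ℝ) ≤ Real.log x.1 := Real.log_nonneg (by exact_mod_cast hp1)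
          have hmono : (2*(1+Real.log x.1))^(ℓ-1) ≤ C := by
            apply pow_le_pow_left₀ (by linarith)
            have : Real.log x.1 ≤ Real.log k :=
              Real.log_le_log hppos (by exact_mod_cast (by omega : x.1 ≤ k))
            linarith
          have b1 : |PowerSeries.coeff x.1 (arctanSeries ^ ℓ)| ≤ C / x.1 :=
            (IH x.1 hp1).trans (by gcongr)
          have b2 : |PowerSeries.coeff x.2 arctanSeries| ≤ 1 / x.2 := coeff_arctan_abs _
          calc |PowerSeries.coeff x.1 (arctanSeries ^ ℓ)| * |PowerSeries.coeff x.2 arctanSeries|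
              ≤ (C / x.1) * (1 / x.2) :=
                mul_le_mul b1 b2 (abs_nonneg _) (by positivity)
            _ = C * (1/((x.1:ℝ)*(x.2:ℝ))) := by ring
      _ = C * ∑ x ∈ Finset.HasAntidiagonal.antidiagonal k,
            (if x.1 = 0 ∨ x.2 = 0 then (0:ℝ) else 1/((x.1:ℝ)*(x.2:ℝ))) := by
          rw [Finset.mul_sum]
      _ = C * ∑ p ∈ Finset.range (k+1),
            (if p = 0 ∨ p = k then (0:ℝ) else 1/((p:ℝ)*((k-p : ℕ):ℝ))) := by
          rw [Finset.Nat.sum_antidiagonal_eq_sum_range_succ_mk]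
          congr 1
          refine Finset.sum_congr rfl fun p hp => ?_
          rw [Finset.mem_range] at hp
          have hiff : (k - p = 0) ↔ (p = k) := by omega
          exact if_congr (or_congr Iff.rfl hiff) rfl rfl
      _ ≤ C * (2*(1+Real.log k)/k) := mul_le_mul_of_nonneg_left (conv_bound k hk) hCnn
      _ = (2 * (1 + Real.log k)) ^ (ℓ + 1 - 1) / k := by
          rw [show C * (2*(1+Real.log k)/k) = (C * (2*(1+Real.log k)))/k by ring, hC,
            ← pow_succ, Nat.sub_add_cancel hℓ]
          simp

theorem arctan_pow_coeff_bound (k ℓ : ℕ) (hk : 1 ≤ k) (hℓ : 1 ≤ ℓ) :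
    |PowerSeries.coeff k (arctanSeries ^ ℓ)| ≤ compSum k ℓ ∧
    |PowerSeries.coeff k (arctanSeries ^ ℓ)| ≤ (2 * (1 + Real.log k)) ^ (ℓ - 1) / k ∧
    (¬ (k % 2 = ℓ % 2) → PowerSeries.coeff k (arctanSeries ^ ℓ) = 0) := by
  exact ⟨arctan_part1 k ℓ, arctan_part2 ℓ hℓ k hk, arctan_part3 k ℓ⟩
end
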